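/- Let (P_t) satisfy P(P_t ≤ α) ≤ α for all t and fixed α ∈ (0,1], and let R_k = inf{t ≥ 1 : #{s ≤ t : P_s ≤ α} ≥ k} be the time of the k-th alarm, for k ≥ 1. Then E[R_k] ≥ (ν+1)(1 − αν/(2k)) ≥ k/(2α) + 1/2, where ν = ⌊k/α⌋. -/

import Mathlib

open MeasureTheory ENNReal

private lemma kARL_arith (α : ℝ) (k : ℕ) (hα0 : 0 < α) (hk : 1 ≤ k) :
    (k : ℝ) / (2 * α) + 1 / 2 ≤
      ((⌊(k : ℝ) / α⌋₊ : ℝ) + 1) * (1 - α * (⌊(k : ℝ) / α⌋₊ : ℝ) / (2 * k)) := by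
  have hk0 : (0:ℝ) < k := by exact_mod_cast hk
  set ν : ℕ := ⌊(k : ℝ) / α⌋₊ with hν
  have hν1 : (ν : ℝ) ≤ (k:ℝ)/α := Nat.floor_le (by positivity)
  have hν2 : (k:ℝ)/α < ν + 1 := Nat.lt_floor_add_one _
  have h1 : α * ν ≤ k := by
    have := (le_div_iff₀ hα0).1 hν1; linarith
  have h2 : (k:ℝ) < α * ν + α := by
    have := (div_lt_iff₀ hα0).1 hν2; nlinarith
  rw [div_add_div _ _ (by positivity : (2:ℝ)*α ≠ 0) (by norm_num : (2:ℝ) ≠ 0),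
    div_le_iff₀ (by positivity), mul_comm, ← sub_nonneg]
  have : (↑ν + 1) * (1 - α * ↑ν / (2 * ↑k)) * (2 * α * 2) - (2 * ↑k + 2 * α * 1)
      = (2/k) * (((k:ℝ) - α*ν) * (α - ((k:ℝ) - α*ν))) := by
    field_simp
    ring
  rw [this]
  exact mul_nonneg (by positivity) (mul_nonneg (by linarith) (by linarith))

private lemma kARL_markov {Ω : Type*} [MeasurableSpace Ω] (μ : Measure Ω)
    [IsProbabilityMeasure μ]
    (P : ℕ → Ω → ℝ) (hmeas : ∀ t, Measurable (P t))
    (α : ℝ) (hα0 : 0 < α)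
    (hsup : ∀ t : ℕ, 1 ≤ t → μ {ω | P t ω ≤ α} ≤ ENNReal.ofReal α)
    (k : ℕ) (hk : 1 ≤ k) (m : ℕ) :
    μ {ω | k ≤ ((Finset.Icc 1 m).filter (fun s => P s ω ≤ α)).card}
      ≤ ENNReal.ofReal (m * α / k) := by
  have hk0 : (0:ℝ) < k := by exact_mod_cast hk
  set N : Ω → ℕ := fun ω => ((Finset.Icc 1 m).filter (fun s => P s ω ≤ α)).card with hN
  have hNsum : ∀ ω, N ω = ∑ s ∈ Finset.Icc 1 m, if P s ω ≤ α then 1 else 0 :=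
    fun ω => Finset.card_filter _ _
  have hA : ∀ s, MeasurableSet {ω | P s ω ≤ α} := fun s => (hmeas s) measurableSet_Iic
  have hmN : Measurable N := by
    simp only [funext hNsum]
    exact Finset.measurable_sum _
      (fun s _ => Measurable.ite (hA s) measurable_const measurable_const)
  have hint : ∫⁻ ω, (N ω : ℝ≥0∞) ∂μ ≤ (m : ℝ≥0∞) * ENNReal.ofReal α := by
    have hpt : ∀ ω, (N ω : ℝ≥0∞) = ∑ s ∈ Finset.Icc 1 m,
        Set.indicator {ω | P s ω ≤ α} (fun _ => (1:ℝ≥0∞)) ω := by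
      intro ω
      rw [hNsum ω, Nat.cast_sum]
      refine Finset.sum_congr rfl fun s _ => ?_
      by_cases h : P s ω ≤ α <;> simp [Set.indicator, h]
    calc ∫⁻ ω, (N ω : ℝ≥0∞) ∂μ
        = ∑ s ∈ Finset.Icc 1 m, μ {ω | P s ω ≤ α} := by
          simp only [funext hpt]
          rw [lintegral_finset_sum _ (fun s _ => (measurable_const.indicator (hA s)))]
          simp only [lintegral_indicator_const (hA _), one_mul]
      _ ≤ ∑ s ∈ Finset.Icc 1 m, ENNReal.ofReal α := by
          refine Finset.sum_le_sum (fun s hs => hsup s ?_)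
          exact (Finset.mem_Icc.1 hs).1
      _ ≤ (m : ℝ≥0∞) * ENNReal.ofReal α := by
          rw [Finset.sum_const, Nat.card_Icc, nsmul_eq_mul]
          simp
  have hcast : Measurable (fun ω => (N ω : ℝ≥0∞)) :=
    Measurable.comp (.of_discrete) hmN
  have hmark := mul_meas_ge_le_lintegral₀ (μ := μ)
    (f := fun ω => (N ω : ℝ≥0∞)) hcast.aemeasurable (k : ℝ≥0∞)
  have hset : {x | (k:ℝ≥0∞) ≤ (N x : ℝ≥0∞)} = {ω | k ≤ N ω} := by
    ext ω; simp [Nat.cast_le]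
  rw [hset] at hmark
  have hklt : ((k:ℝ≥0∞)) ≠ 0 := Nat.cast_ne_zero.2 (by omega)
  have hdiv : μ {ω | k ≤ N ω} ≤ (m : ℝ≥0∞) * ENNReal.ofReal α / k := by
    rw [ENNReal.le_div_iff_mul_le (Or.inl hklt) (Or.inl (natCast_ne_top k)), mul_comm]
    exact hmark.trans hint
  refine hdiv.trans (le_of_eq ?_)
  rw [ENNReal.ofReal_div_of_pos hk0, ENNReal.ofReal_mul (by positivity),
    ENNReal.ofReal_natCast, ENNReal.ofReal_natCast]

private lemma kARL_setEq {Ω : Type*} (P : ℕ → Ω → ℝ) (α : ℝ) (k : ℕ) (hk : 1 ≤ k)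
    (Rk : Ω → ℕ∞)
    (hRk : ∀ ω, Rk ω = sInf {n : ℕ∞ | ∃ t : ℕ, (t : ℕ∞) = n ∧ 1 ≤ t ∧
      k ≤ ((Finset.Icc 1 t).filter (fun s => P s ω ≤ α)).card}) (m : ℕ) :
    {ω | (m : ℕ∞) < Rk ω}
      = {ω | k ≤ ((Finset.Icc 1 m).filter (fun s => P s ω ≤ α)).card}ᶜ := by
  ext ω
  simp only [Set.mem_setOf_eq, Set.mem_compl_iff, hRk ω, not_le]
  constructor
  · intro h
    by_contra hc
    push_neg at hc
    have hm1 : 1 ≤ m := by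
      by_contra hm
      interval_cases m
      simp at hc; omega
    have : sInf {n : ℕ∞ | ∃ t : ℕ, (t : ℕ∞) = n ∧ 1 ≤ t ∧
        k ≤ ((Finset.Icc 1 t).filter (fun s => P s ω ≤ α)).card} ≤ (m : ℕ∞) :=
      sInf_le ⟨m, rfl, hm1, hc⟩
    exact absurd (h.trans_le this) (lt_irrefl _)
  · intro h
    have hle : ((m+1 : ℕ) : ℕ∞) ≤ sInf {n : ℕ∞ | ∃ t : ℕ, (t : ℕ∞) = n ∧ 1 ≤ t ∧
        k ≤ ((Finset.Icc 1 t).filter (fun s => P s ω ≤ α)).card} := by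
      refine le_sInf fun n hn => ?_
      obtain ⟨t, rfl, ht1, htk⟩ := hn
      have hmt : m < t := by
        by_contra hmt
        push_neg at hmt
        exact absurd (htk.trans_lt (lt_of_le_of_lt (Finset.card_le_card
          (Finset.filter_subset_filter _ (Finset.Icc_subset_Icc_right hmt))) h)) (lt_irrefl _)
      exact_mod_cast hmt
    refine lt_of_lt_of_le ?_ hle
    exact_mod_cast Nat.lt_succ_self m

/-- Under marginal super-uniformity, the expected time to the `k`-th alarm
(the `k`-ARL, expressed via the survival-function formula) is at least
`(ν+1)(1 − αν/(2k))`, where `ν = ⌊k/α⌋`, and this quantity is at least `k/(2α) + 1/2`. -/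
theorem kARL_lower_bound_superuniform
    {Ω : Type*} [MeasurableSpace Ω] (μ : Measure Ω) [IsProbabilityMeasure μ]
    (P : ℕ → Ω → ℝ) (hmeas : ∀ t, Measurable (P t))
    (hrange : ∀ t ω, P t ω ∈ Set.Icc (0 : ℝ) 1)
    (α : ℝ) (hα : α ∈ Set.Ioc (0 : ℝ) 1)
    (hsup : ∀ t : ℕ, 1 ≤ t → μ {ω | P t ω ≤ α} ≤ ENNReal.ofReal α)
    (k : ℕ) (hk : 1 ≤ k)
    (Rk : Ω → ℕ∞)
    (hRk : ∀ ω, Rk ω = sInf {n : ℕ∞ | ∃ t : ℕ, (t : ℕ∞) = n ∧ 1 ≤ t ∧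
      k ≤ ((Finset.Icc 1 t).filter (fun s => P s ω ≤ α)).card}) :
    ENNReal.ofReal (((⌊(k : ℝ) / α⌋₊ : ℝ) + 1) * (1 - α * (⌊(k : ℝ) / α⌋₊ : ℝ) / (2 * k)))
        ≤ ∑' m : ℕ, μ {ω | (m : ℕ∞) < Rk ω} ∧
      (k : ℝ) / (2 * α) + 1 / 2 ≤
        ((⌊(k : ℝ) / α⌋₊ : ℝ) + 1) * (1 - α * (⌊(k : ℝ) / α⌋₊ : ℝ) / (2 * k)) := by
  obtain ⟨hα0, hα1⟩ := hα
  refine ⟨?_, kARL_arith α k hα0 hk⟩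
  have hk0 : (0:ℝ) < k := by exact_mod_cast hk
  set ν : ℕ := ⌊(k : ℝ) / α⌋₊ with hν
  have hν1 : (ν : ℝ) ≤ (k:ℝ)/α := Nat.floor_le (by positivity)
  have h1 : α * ν ≤ k := by
    have := (le_div_iff₀ hα0).1 hν1; linarith
  have hA : ∀ s, MeasurableSet {ω | P s ω ≤ α} := fun s => (hmeas s) measurableSet_Iic
  -- measurability of the alarm-count super-level sets
  have hNm : ∀ m : ℕ, MeasurableSet
      {ω | k ≤ ((Finset.Icc 1 m).filter (fun s => P s ω ≤ α)).card} := by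
    intro m
    have hmN : Measurable (fun ω => ((Finset.Icc 1 m).filter (fun s => P s ω ≤ α)).card) := by
      simp only [funext (fun ω => Finset.card_filter (fun s => P s ω ≤ α) (Finset.Icc 1 m))]
      exact Finset.measurable_sum _
        (fun s _ => Measurable.ite (hA s) measurable_const measurable_const)
    exact hmN (measurableSet_Ici (a := k))
  -- pointwise lower bound on survival probabilities
  have hsurv : ∀ m : ℕ, m ≤ ν →
      ENNReal.ofReal (1 - m * α / k) ≤ μ {ω | (m : ℕ∞) < Rk ω} := by
    intro m hm
    rw [kARL_setEq P α k hk Rk hRk m, prob_compl_eq_one_sub (hNm m)]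
    have hle := kARL_markov μ P hmeas α hα0 hsup k hk m
    calc ENNReal.ofReal (1 - m * α / k)
        = 1 - ENNReal.ofReal (m * α / k) := by
          rw [ENNReal.ofReal_sub _ (by positivity), ENNReal.ofReal_one]
      _ ≤ 1 - μ {ω | k ≤ ((Finset.Icc 1 m).filter (fun s => P s ω ≤ α)).card} :=
          tsub_le_tsub_left hle 1
  -- Gauss sum
  have hg : (∑ m ∈ Finset.range (ν+1), (m:ℝ)) * 2 = (ν+1) * ν := by
    have h := Finset.sum_range_id_mul_two (ν+1)
    rw [Nat.add_sub_cancel] at h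
    have h2 := congrArg (Nat.cast (R := ℝ)) h
    push_cast at h2
    linarith
  have hsum : ∑ m ∈ Finset.range (ν+1), (1 - (m:ℝ) * α / k)
      = ((ν:ℝ) + 1) * (1 - α * ν / (2 * k)) := by
    rw [Finset.sum_sub_distrib, Finset.sum_const, Finset.card_range, nsmul_eq_mul]
    have e : ∑ m ∈ Finset.range (ν+1), ((m:ℝ) * α / k)
        = (∑ m ∈ Finset.range (ν+1), (m:ℝ)) * α / k := by
      rw [← Finset.sum_div, ← Finset.sum_mul]
    rw [e]
    field_simp
    push_cast
    linear_combination (-α) * hg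
  have hnonneg : ∀ m ∈ Finset.range (ν+1), (0:ℝ) ≤ 1 - (m:ℝ) * α / k := by
    intro m hm
    have hm' : (m:ℝ) ≤ ν := by exact_mod_cast Nat.lt_succ_iff.1 (Finset.mem_range.1 hm)
    have : (m:ℝ) * α ≤ k := by nlinarith
    have : (m:ℝ) * α / k ≤ 1 := by rw [div_le_one hk0]; linarith
    linarith
  calc ENNReal.ofReal (((ν:ℝ) + 1) * (1 - α * ν / (2 * k)))
      = ∑ m ∈ Finset.range (ν+1), ENNReal.ofReal (1 - (m:ℝ) * α / k) := by
        rw [← ENNReal.ofReal_sum_of_nonneg hnonneg, hsum]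
    _ ≤ ∑ m ∈ Finset.range (ν+1), μ {ω | (m : ℕ∞) < Rk ω} :=
        Finset.sum_le_sum (fun m hm => hsurv m (Nat.lt_succ_iff.1 (Finset.mem_range.1 hm)))
    _ ≤ ∑' m : ℕ, μ {ω | (m : ℕ∞) < Rk ω} := ENNReal.sum_le_tsum _
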